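/- Let A, B, G be finitely generated groups with A ⊑ B, and suppose there is a surjective group homomorphism from G onto A. Then there exists a finitely generated group H such that G ⊑ H and there is a surjective group homomorphism from H onto B. -/

import Mathlib

/-- `G` preforms `H` (written `G ⊑ H` in the paper). -/
def Preforms (G : Type*) (H : Type*) [Group G] [Group H] : Prop :=
  ∃ (k : ℕ) (t : Fin k → H), Subgroup.closure (Set.range t) = ⊤ ∧
    ∀ R : ℕ, ∃ s : Fin k → G, Subgroup.closure (Set.range s) = ⊤ ∧
      ∀ w : FreeGroup (Fin k), (FreeGroup.toWord w).length ≤ R →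
        (FreeGroup.lift s w = 1 ↔ FreeGroup.lift t w = 1)

open Filter

/-- Main construction packaged as an auxiliary lemma with explicit data. -/
theorem aux_main
    (A B G : Type*) [Group A] [Group B] [Group G]
    (k m : ℕ) (t : Fin k → B) (htgen : Subgroup.closure (Set.range t) = ⊤)
    (a : ℕ → Fin k → A)
    (harel : ∀ n (w : FreeGroup (Fin k)), (FreeGroup.toWord w).length ≤ n →
      (FreeGroup.lift (a n) w = 1 ↔ FreeGroup.lift t w = 1))
    (π : G →* A)
    (s' : ℕ → Fin (k + m) → G)
    (hs'gen : ∀ n, Subgroup.closure (Set.range (s' n)) = ⊤)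
    (hleft : ∀ n (j : Fin k), π (s' n (Fin.castAdd m j)) = a n j)
    (hright : ∀ n (j : Fin m), π (s' n (Fin.natAdd k j)) = 1) :
    ∃ (H : Type) (_ : Group H), Group.FG H ∧ Preforms G H ∧
      ∃ ρ : H →* B, Function.Surjective ρ := by
  classical
  set U : Filter ℕ := (Filter.hyperfilter ℕ : Filter ℕ) with hU
  let N : Subgroup (FreeGroup (Fin (k + m))) :=
  { carrier := {w | ∀ᶠ n in U, FreeGroup.lift (s' n) w = 1}
    one_mem' := Filter.Eventually.of_forall (by simp)
    mul_mem' := by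
      intro x y hx hy
      exact (hx.and hy).mono (fun n h => by simp [map_mul, h.1, h.2])
    inv_mem' := by
      intro x hx
      exact hx.mono (fun n h => by simp [map_inv, h]) }
  have memN : ∀ w : FreeGroup (Fin (k + m)),
      w ∈ N ↔ ∀ᶠ n in U, FreeGroup.lift (s' n) w = 1 := fun w => Iff.rfl
  haveI hN : N.Normal := by
    constructor
    intro w hw g
    rw [memN] at hw ⊢
    exact hw.mono (fun n h => by simp [map_mul, map_inv, h])
  let u : Fin (k + m) → FreeGroup (Fin (k + m)) ⧸ N := fun i => QuotientGroup.mk (FreeGroup.of i)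
  have hlift : FreeGroup.lift u = QuotientGroup.mk' N :=
    FreeGroup.ext_hom _ _ (fun i => by simp [u])
  have hu : Subgroup.closure (Set.range u) = ⊤ := by
    have h1 : Set.range u = (QuotientGroup.mk' N) '' Set.range (FreeGroup.of) := by
      rw [← Set.range_comp]; rfl
    rw [h1, ← MonoidHom.map_closure, FreeGroup.closure_range_of]
    exact Subgroup.map_top_of_surjective _ (QuotientGroup.mk'_surjective N)
  refine ⟨FreeGroup (Fin (k + m)) ⧸ N, inferInstance, ?_, ?_, ?_⟩
  · exact Group.fg_iff.mpr ⟨Set.range u, hu, Set.finite_range u⟩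
  · refine ⟨k + m, u, hu, ?_⟩
    intro R
    have hWfin : {w : FreeGroup (Fin (k + m)) | (FreeGroup.toWord w).length ≤ R}.Finite :=
      (List.finite_length_le (α := Fin (k + m) × Bool) (n := R)).preimage
        (FreeGroup.toWord_injective.injOn)
    have hev : ∀ᶠ n in U, ∀ w ∈ {w : FreeGroup (Fin (k + m)) |
        (FreeGroup.toWord w).length ≤ R}, (FreeGroup.lift (s' n) w = 1 ↔ w ∈ N) := by
      rw [Filter.eventually_all_finite hWfin]
      intro w _
      by_cases hwN : w ∈ N
      · exact ((memN w).mp hwN).mono fun n h => iff_of_true h hwN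
      · have h2 : ∀ᶠ n in U, ¬ FreeGroup.lift (s' n) w = 1 := by
          rw [hU]
          exact Ultrafilter.eventually_not.mpr (fun h => hwN ((memN w).mpr (by rwa [hU])))
        exact h2.mono fun n h => iff_of_false h hwN
    obtain ⟨n, hn⟩ := hev.exists
    refine ⟨s' n, hs'gen n, fun w hw => ?_⟩
    rw [hlift]
    exact (hn w hw).trans (QuotientGroup.eq_one_iff w).symm
  · let t' : Fin (k + m) → B := Fin.append t (fun _ => 1)
    let φ : FreeGroup (Fin (k + m)) →* B := FreeGroup.lift t'
    let v : Fin (k + m) → FreeGroup (Fin k) := Fin.append FreeGroup.of (fun _ => 1)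
    let σ : FreeGroup (Fin (k + m)) →* FreeGroup (Fin k) := FreeGroup.lift v
    have h1 : ∀ w, φ w = FreeGroup.lift t (σ w) := by
      have he : φ = (FreeGroup.lift t).comp σ := by
        refine FreeGroup.ext_hom _ _ (fun i => ?_)
        refine Fin.addCases (fun j => ?_) (fun j => ?_) i <;>
          simp [φ, σ, v, t', Fin.append_left, Fin.append_right]
      intro w; rw [he]; rfl
    have h2 : ∀ n, (FreeGroup.lift (a n)).comp σ = π.comp (FreeGroup.lift (s' n)) := by
      intro n
      refine FreeGroup.ext_hom _ _ (fun i => ?_)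
      refine Fin.addCases (fun j => ?_) (fun j => ?_) i <;>
        simp [σ, v, Fin.append_left, Fin.append_right, hleft, hright]
    have hker : ∀ w ∈ N, φ w = 1 := by
      intro w hw
      rw [memN] at hw
      have hE : {n | FreeGroup.lift (s' n) w = 1}.Infinite := by
        intro hfin
        have hw' : {n | FreeGroup.lift (s' n) w = 1} ∈ Filter.hyperfilter ℕ :=
          Ultrafilter.mem_coe.mp (by rwa [hU] at hw)
        exact Filter.notMem_hyperfilter_of_finite hfin hw'

      set L := (FreeGroup.toWord (σ w)).length with hL
      obtain ⟨n, hn1, hn2⟩ : ∃ n, FreeGroup.lift (s' n) w = 1 ∧ L ≤ n := by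
        by_contra hcon
        push_neg at hcon
        refine hE (Set.Finite.subset (Set.finite_Iio L) ?_)
        intro n hn
        exact hcon n hn
      have ha1 : FreeGroup.lift (a n) (σ w) = 1 := by
        have := DFunLike.congr_fun (h2 n) w
        simp only [MonoidHom.comp_apply] at this
        rw [this, hn1, map_one]
      have hB : FreeGroup.lift t (σ w) = 1 := (harel n (σ w) hn2).mp ha1
      rw [h1 w, hB]
    refine ⟨QuotientGroup.lift N φ hker, ?_⟩
    have hle : Subgroup.closure (Set.range t) ≤ (QuotientGroup.lift N φ hker).range := by
      rw [Subgroup.closure_le]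
      rintro _ ⟨i, rfl⟩
      exact ⟨QuotientGroup.mk (FreeGroup.of (Fin.castAdd m i)),
        by show φ (FreeGroup.of (Fin.castAdd m i)) = t i; simp [φ, t', Fin.append_left]⟩
    intro b
    obtain ⟨h, hh⟩ := hle (htgen ▸ Subgroup.mem_top b)
    exact ⟨h, hh⟩

/-- If `A ⊑ B` and `A` is a quotient of `G`, then there exists a group `H` with `G ⊑ H`
such that `B` is a quotient of `H`. -/
theorem exists_preformed_with_quotient
    (A B G : Type*) [Group A] [Group B] [Group G]
    (hA : Group.FG A) (hB : Group.FG B) (hG : Group.FG G)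
    (hAB : Preforms A B) (π : G →* A) (hπ : Function.Surjective π) :
    ∃ (H : Type) (_ : Group H), Group.FG H ∧ Preforms G H ∧
      ∃ ρ : H →* B, Function.Surjective ρ := by
  classical
  obtain ⟨k, t, htgen, hta⟩ := hAB
  choose a hagen harel using hta
  obtain ⟨Sset, hScl, hSfin⟩ := Group.fg_iff.mp hG
  let m := hSfin.toFinset.card
  let g : Fin m → G := fun i => (hSfin.toFinset.equivFin.symm i : G)
  have hggen : Subgroup.closure (Set.range g) = ⊤ := by
    have hrg : Set.range g = Sset := by
      ext y; constructor
      · rintro ⟨i, rfl⟩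
        exact hSfin.mem_toFinset.mp (Finset.coe_mem _)
      · intro hy
        exact ⟨hSfin.toFinset.equivFin ⟨y, by simpa⟩, by simp [g]⟩
    rw [hrg, hScl]
  choose sh hsh using fun n i => hπ (a n i)
  have key : ∀ n (j : Fin m), ∃ y ∈ Subgroup.closure (Set.range (sh n)), π y = π (g j) := by
    intro n j
    have hmem : π (g j) ∈ Subgroup.map π (Subgroup.closure (Set.range (sh n))) := by
      rw [MonoidHom.map_closure]
      have him : π '' Set.range (sh n) = Set.range (a n) := by
        have hco : π ∘ sh n = a n := funext fun i => hsh n i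
        rw [← Set.range_comp, hco]
      rw [him, hagen n]
      exact Subgroup.mem_top _
    rw [Subgroup.mem_map] at hmem
    exact hmem
  choose x hxmem hxeq using key
  let s' : ℕ → Fin (k + m) → G := fun n => Fin.append (sh n) (fun j => (x n j)⁻¹ * g j)
  have hleft : ∀ n (j : Fin k), π (s' n (Fin.castAdd m j)) = a n j := by
    intro n j; simp [s', Fin.append_left, hsh]
  have hright : ∀ n (j : Fin m), π (s' n (Fin.natAdd k j)) = 1 := by
    intro n j; simp [s', Fin.append_right, map_mul, map_inv, hxeq]
  have hs'gen : ∀ n, Subgroup.closure (Set.range (s' n)) = ⊤ := by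
    intro n
    have hsub : Subgroup.closure (Set.range (sh n)) ≤ Subgroup.closure (Set.range (s' n)) := by
      apply Subgroup.closure_mono
      rintro _ ⟨i, rfl⟩
      exact ⟨Fin.castAdd m i, by simp [s', Fin.append_left]⟩
    rw [eq_top_iff, ← hggen, Subgroup.closure_le]
    rintro _ ⟨j, rfl⟩
    have h1 : x n j ∈ Subgroup.closure (Set.range (s' n)) := hsub (hxmem n j)
    have h2 : (x n j)⁻¹ * g j ∈ Subgroup.closure (Set.range (s' n)) :=
      Subgroup.subset_closure ⟨Fin.natAdd k j, by simp [s', Fin.append_right]⟩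
    have h3 := mul_mem h1 h2
    simpa using h3
  exact aux_main A B G k m t htgen a harel π s' hs'gen hleft hright
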